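/- arXiv:2307.13830 — 4 statements merged into one kernel-verified Lean document; each statement's English description precedes it below -/
import Mathlib

section
/- (i) If ran(G_{z∘}) ∩ 𝔥₁ = {0} for a single z∘ ∈ ρ(H), then ran(G_z) ∩ 𝔥₁ = {0} for every z ∈ ρ(H). (ii) For z ∈ ρ(H), ran(G_z) ∩ 𝔥₁ = {0} if and only if ran(A*) ∩ 𝔉 = {0}. -/
open scoped InnerProductSpace ComplexConjugate

noncomputable section

local notation "⟪" x ", " y "⟫" => @inner ℂ _ _ x y

/-- Abstract context for the paper "On the resolvent of H+A*+A":
`F` is the Hilbert space `𝔉`, `H1` is the space `𝔥₁ = dom(H)` endowed with the graph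
norm, `Hm1` is the dual space `𝔥₋₁`.  `j1 : 𝔥₁ ↪ 𝔉` and `jm : 𝔉 ↪ 𝔥₋₁` are the dense
inclusions, `Hop` is `H` viewed as a bounded operator `𝔥₁ → 𝔉`, `Hbar` is its closure
`H̄ : 𝔉 → 𝔥₋₁`, `lamInf = inf σ(H)`, `res = ρ(H)`, `RF z = (-H+z)⁻¹ : 𝔉 → 𝔥₁`,
`RM z` is its extension `𝔥₋₁ → 𝔉`, `pair` is the duality pairing between `𝔥₋₁` and `𝔥₁`
(conjugate-linear in the first variable) extending the scalar product of `𝔉`,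
`ns s` is the scale norm `‖ψ‖_s = ‖(H²+1)^{s/2}ψ‖` on `𝔥₁` (`0 ≤ s ≤ 1`),
`A ∈ 𝔅(𝔥₁,𝔉)` and `Astar : 𝔉 → 𝔥₋₁` is its dual-pairing adjoint. -/
structure Ctx (F H1 Hm1 : Type*)
    [NormedAddCommGroup F] [InnerProductSpace ℂ F] [CompleteSpace F]
    [NormedAddCommGroup H1] [InnerProductSpace ℂ H1] [CompleteSpace H1]
    [NormedAddCommGroup Hm1] [InnerProductSpace ℂ Hm1] [CompleteSpace Hm1] where
  j1 : H1 →L[ℂ] F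
  jm : F →L[ℂ] Hm1
  Hop : H1 →L[ℂ] F
  Hbar : F →L[ℂ] Hm1
  lamInf : ℝ
  res : Set ℂ
  RF : ℂ → (F →L[ℂ] H1)
  RM : ℂ → (Hm1 →L[ℂ] F)
  pair : Hm1 → H1 → ℂ
  ns : ℝ → H1 → ℝ
  A : H1 →L[ℂ] F
  Astar : F →L[ℂ] Hm1
  j1_inj : Function.Injective j1
  j1_dense : DenseRange j1
  jm_inj : Function.Injective jm
  jm_dense : DenseRange jm
  /-- the norm of `𝔥₁` is the graph norm of `H` -/
  norm1_sq : ∀ ψ : H1, ‖ψ‖ ^ 2 = ‖j1 ψ‖ ^ 2 + ‖Hop ψ‖ ^ 2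
  /-- `H` is symmetric -/
  Hsymm : ∀ ψ φ : H1, ⟪j1 ψ, Hop φ⟫ = ⟪Hop ψ, j1 φ⟫
  /-- `H` is self-adjoint: non-real points belong to `ρ(H)` -/
  res_nonreal : ∀ z : ℂ, z.im ≠ 0 → z ∈ res
  /-- `H` is bounded from below by `lamInf` -/
  res_below : ∀ x : ℝ, x < lamInf → (x : ℂ) ∈ res
  /-- `lamInf` is exactly `inf σ(H)` -/
  lamInf_not_res : (lamInf : ℂ) ∉ res
  RF_inv_left : ∀ z ∈ res, (RF z).comp (z • j1 - Hop) = ContinuousLinearMap.id ℂ H1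
  RF_inv_right : ∀ z ∈ res, (z • j1 - Hop).comp (RF z) = ContinuousLinearMap.id ℂ F
  /-- `H̄` extends `H` -/
  Hbar_ext : Hbar.comp j1 = jm.comp Hop
  /-- `RM z` extends `RF z` -/
  RM_ext : ∀ z ∈ res, (RM z).comp jm = j1.comp (RF z)
  RM_inv_left : ∀ z ∈ res, (RM z).comp (z • jm - Hbar) = ContinuousLinearMap.id ℂ F
  RM_inv_right : ∀ z ∈ res, (z • jm - Hbar).comp (RM z) = ContinuousLinearMap.id ℂ Hm1
  pair_add : ∀ x y φ, pair (x + y) φ = pair x φ + pair y φ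
  pair_smul : ∀ (a : ℂ) x φ, pair (a • x) φ = starRingEnd ℂ a * pair x φ
  pair_addr : ∀ x φ₁ φ₂, pair x (φ₁ + φ₂) = pair x φ₁ + pair x φ₂
  pair_smulr : ∀ (a : ℂ) x φ, pair x (a • φ) = a * pair x φ
  pair_cont : ∀ φ, Continuous fun x => pair x φ
  /-- the pairing extends the scalar product of `𝔉` -/
  pair_jm : ∀ (ψ : F) (φ : H1), pair (jm ψ) φ = ⟪ψ, j1 φ⟫
  pair_nondeg : ∀ x, (∀ φ, pair x φ = 0) → x = 0
  ns_zero : ∀ ψ, ns 0 ψ = ‖j1 ψ‖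
  ns_one : ∀ ψ, ns 1 ψ = ‖ψ‖
  ns_nonneg : ∀ s ψ, 0 ≤ ns s ψ
  ns_mono : ∀ s t : ℝ, 0 ≤ s → s ≤ t → t ≤ 1 → ∀ ψ, ns s ψ ≤ ns t ψ
  /-- interpolation property of the scale of Hilbert spaces -/
  ns_interp : ∀ s : ℝ, 0 ≤ s → s ≤ 1 → ∀ ψ, ns s ψ ≤ ‖ψ‖ ^ s * ‖j1 ψ‖ ^ (1 - s)
  /-- `Astar` is the dual-pairing adjoint of `A` -/
  Astar_spec : ∀ (ψ : F) (φ : H1), pair (Astar ψ) φ = ⟪ψ, A φ⟫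

variable {F H1 Hm1 : Type*}
  [NormedAddCommGroup F] [InnerProductSpace ℂ F] [CompleteSpace F]
  [NormedAddCommGroup H1] [InnerProductSpace ℂ H1] [CompleteSpace H1]
  [NormedAddCommGroup Hm1] [InnerProductSpace ℂ Hm1] [CompleteSpace Hm1]

namespace Ctx

variable (c : Ctx F H1 Hm1)

/-- `G_z := (A R_{z̄})* ∈ 𝔅(𝔉)`. -/
def G (z : ℂ) : F →L[ℂ] F :=
  ContinuousLinearMap.adjoint (c.A.comp (c.RF (starRingEnd ℂ z)))

/-- `G_z* ∈ 𝔅(𝔉)`, for `z` real this is `G*`. -/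
def Gst (lam : ℝ) : F →L[ℂ] F :=
  ContinuousLinearMap.adjoint (c.G (lam : ℂ))

/-- `𝔸 : 𝔥₁ → 𝔉⊕𝔥₁`, `𝔸ψ = Aψ ⊕ ψ`. -/
def Ab : H1 →L[ℂ] (F × H1) :=
  c.A.prod (ContinuousLinearMap.id ℂ H1)

/-- `𝔾_z : 𝔉⊕𝔥₋₁ → 𝔉`, `𝔾_z(ψ⊕φ) = G_zψ + R_zφ`. -/
def Gb (z : ℂ) : (F × Hm1) →L[ℂ] F :=
  (c.G z).comp (ContinuousLinearMap.fst ℂ F Hm1) +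
    (c.RM z).comp (ContinuousLinearMap.snd ℂ F Hm1)

/-- `𝔾_{z̄}* : 𝔉 → 𝔉⊕𝔥₁`, `ψ ↦ (A R_z ψ) ⊕ (R_z ψ)`. -/
def Gbstar (z : ℂ) : F →L[ℂ] (F × H1) :=
  (c.A.comp (c.RF z)).prod (c.RF z)

/-- `M_z = 𝔸(𝔾 - 𝔾_z) = (z-λ∘) 𝔾* 𝔾_z : 𝔉⊕𝔥₋₁ → 𝔉⊕𝔥₁`. -/
def M (lam : ℝ) (z : ℂ) : (F × Hm1) →L[ℂ] (F × H1) :=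
  (z - (lam : ℂ)) • ((c.Gbstar (lam : ℂ)).comp (c.Gb z))

/-- `M' : 𝔉⊕𝔥₋₁ → 𝔉⊕𝔥₁` is a realization of `M_z := 𝔸(𝔾 - 𝔾_z)`, i.e. the second
component of `M' x` is the lift to `𝔥₁` of `(𝔾 - 𝔾_z)x` and the first component is `A`
applied to it. -/
def IsMLift (lam : ℝ) (z : ℂ) (M' : (F × Hm1) →L[ℂ] (F × H1)) : Prop :=
  ∀ x : F × Hm1,
    c.j1 ((M' x).2) = c.Gb (lam : ℂ) x - c.Gb z x ∧ (M' x).1 = c.A ((M' x).2)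

/-- The domain `𝔇 = {ψ ∈ 𝔉 : ψ - Gψ ∈ 𝔥₁}` (with `G = G_{λ∘}`). -/
def Dom (lam : ℝ) : Set F :=
  {ψ | ∃ φ : H1, ψ - c.G (lam : ℂ) ψ = c.j1 φ}

/-- The action of the block operator matrix `Θ_S = [[T_S, 1-G*],[1-G, -R]]` on the element
`ψ ⊕ φ` of its domain `𝔇⊕𝔉`; here `ψ0 ∈ 𝔥₁` is the lift of `(1-G)ψ`, so that
`T_Sψ = (1-G*)S(1-G)ψ = (1-G*)(Sψ0)`. -/
def ThetaS (lam : ℝ) (S : H1 →ₗ[ℂ] F) (ψ : F) (ψ0 : H1) (φ : F) : F × H1 :=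
  (S ψ0 - c.Gst lam (S ψ0) + φ - c.Gst lam φ, ψ0 - c.RF (lam : ℂ) φ)

/-- The action of `Θ_S + M_z` on `ψ ⊕ φ ∈ 𝔇⊕𝔉`. -/
def ThetaMS (lam : ℝ) (S : H1 →ₗ[ℂ] F) (z : ℂ) (ψ : F) (ψ0 : H1) (φ : F) : F × H1 :=
  c.ThetaS lam S ψ ψ0 φ + c.M lam z (ψ, c.jm φ)

/-- `Λ ∈ 𝔅(𝔉⊕𝔥₁, 𝔉⊕𝔥₋₁)` is the (two-sided) inverse of `Θ_S + M_z`. -/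
def IsInvTheta (lam : ℝ) (S : H1 →ₗ[ℂ] F) (z : ℂ)
    (Λ : (F × H1) →L[ℂ] (F × Hm1)) : Prop :=
  (∀ (ψ : F) (ψ0 : H1) (φ : F), c.j1 ψ0 = ψ - c.G (lam : ℂ) ψ →
    Λ (c.ThetaMS lam S z ψ ψ0 φ) = (ψ, c.jm φ)) ∧
  (∀ y : F × H1, ∃ (ψ : F) (ψ0 : H1) (φ : F),
    c.j1 ψ0 = ψ - c.G (lam : ℂ) ψ ∧ Λ y = (ψ, c.jm φ) ∧ c.ThetaMS lam S z ψ ψ0 φ = y)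

/-- `Z_S := {z ∈ ρ(H) : (Θ_S + M_z)⁻¹ ∈ 𝔅(𝔉⊕𝔥₁, 𝔉⊕𝔥₋₁)}`. -/
def ZS (lam : ℝ) (S : H1 →ₗ[ℂ] F) : Set ℂ :=
  {z | z ∈ c.res ∧ ∃ Λ : (F × H1) →L[ℂ] (F × Hm1), c.IsInvTheta lam S z Λ}

/-- `R̂_z = R_z + 𝔾_z Λ 𝔾_{z̄}* : 𝔉 → 𝔉`. -/
def Rhat (z : ℂ) (Λ : (F × H1) →L[ℂ] (F × Hm1)) : F →L[ℂ] F :=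
  c.j1.comp (c.RF z) + (c.Gb z).comp (Λ.comp (c.Gbstar z))

/-- The duality pairing `⟨⟨·,·⟩⟩_{-1,1}` between `𝔉⊕𝔥₋₁` and `𝔉⊕𝔥₁`. -/
def pairX (x : F × Hm1) (y : F × H1) : ℂ :=
  ⟪x.1, y.1⟫ + c.pair x.2 y.2

/-- Assumption (H3): `ran(G_z) ∩ 𝔥₁ = {0}` for all `z ∈ ρ(H)`. -/
def H3 : Prop :=
  ∀ z ∈ c.res, ∀ (ψ : F) (φ : H1), c.G z ψ = c.j1 φ → c.G z ψ = 0

/-- `S` is a symmetric operator (with domain containing `𝔥₁`). -/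
def IsSymmOp (S : H1 →ₗ[ℂ] F) : Prop :=
  ∀ ψ φ : H1, ⟪S ψ, c.j1 φ⟫ = ⟪c.j1 ψ, S φ⟫

/-- `S` is `H`-small with constants `a`, `b`. -/
def HSmall (S : H1 →ₗ[ℂ] F) (a b : ℝ) : Prop :=
  ∀ ψ : H1, ‖S ψ‖ ≤ a * ‖c.Hop ψ‖ + b * ‖c.j1 ψ‖

/-- `HSf ψ ψ0` realizes the action of `H_S = H̄ + A* + A_S` on `ψ ∈ 𝔇` (with `ψ0` the lift
of `(1-G)ψ`): `H_Sψ ∈ 𝔉` is characterized by `H_Sψ = H̄ψ + A*ψ + Aψ0 - T_Sψ` in `𝔥₋₁`. -/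
def IsHSAction (lam : ℝ) (S : H1 →ₗ[ℂ] F) (HSf : F → H1 → F) : Prop :=
  ∀ (ψ : F) (ψ0 : H1), c.j1 ψ0 = ψ - c.G (lam : ℂ) ψ →
    c.jm (HSf ψ ψ0) =
      c.Hbar ψ + c.Astar ψ + c.jm (c.A ψ0 - (S ψ0 - c.Gst lam (S ψ0)))

/-- `Rop = (-(H+W)+z)⁻¹`, the resolvent at `z` of the perturbation of `H` by the
`H`-bounded operator `W` (with domain `𝔥₁`). -/
def IsResolventOf (W : H1 →L[ℂ] F) (z : ℂ) (Rop : F →L[ℂ] F) : Prop :=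
  (∀ ψ : H1, Rop (z • c.j1 ψ - (c.Hop ψ + W ψ)) = c.j1 ψ) ∧
  (∀ χ : F, ∃ ψ : H1, Rop χ = c.j1 ψ ∧ z • c.j1 ψ - (c.Hop ψ + W ψ) = χ)

/-- `Rop = (-H_S+z)⁻¹`, the resolvent at `z` of the operator `H_S` with domain `𝔇` whose
action is realized by `HSf`. -/
def IsResolventOfD (lam : ℝ) (HSf : F → H1 → F) (z : ℂ) (Rop : F →L[ℂ] F) : Prop :=
  (∀ (ψ : F) (ψ0 : H1), c.j1 ψ0 = ψ - c.G (lam : ℂ) ψ →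
    Rop (z • ψ - HSf ψ ψ0) = ψ) ∧
  (∀ χ : F, ∃ (ψ : F) (ψ0 : H1),
    c.j1 ψ0 = ψ - c.G (lam : ℂ) ψ ∧ Rop χ = ψ ∧ z • ψ - HSf ψ ψ0 = χ)

/-- `ψ ∈ 𝔥_s` (for `0 ≤ s ≤ 1`), i.e. `ψ ∈ 𝔉` is the limit of a `‖·‖_s`-Cauchy sequence
of elements of `𝔥₁`. -/
def memHs (s : ℝ) (ψ : F) : Prop :=
  ∃ u : ℕ → H1, Filter.Tendsto (fun n => c.j1 (u n)) Filter.atTop (nhds ψ) ∧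
    ∀ ε > 0, ∃ N, ∀ m ≥ N, ∀ n ≥ N, c.ns s (u m - u n) < ε

/-- `T ∈ 𝔅(𝔥_s, 𝔉)` (with `T` given on `𝔥₁`): `T` is bounded for the `‖·‖_s`-norm. -/
def MemBs (s : ℝ) (T : H1 →L[ℂ] F) : Prop :=
  ∃ C : ℝ, 0 ≤ C ∧ ∀ ψ : H1, ‖T ψ‖ ≤ C * c.ns s ψ

/-- `T` (with domain containing `𝔥₁ ⊆ 𝔥_{1/2}`) is closable as an operator in `𝔉`. -/
def ClosableOp (T : H1 →L[ℂ] F) : Prop :=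
  ∀ (u : ℕ → H1) (χ : F),
    Filter.Tendsto (fun n => c.j1 (u n)) Filter.atTop (nhds 0) →
    Filter.Tendsto (fun n => T (u n)) Filter.atTop (nhds χ) → χ = 0

/-- `Tstar` is (the restriction to `𝔥₁` of) the adjoint of `T`. -/
def IsAdjointOn (T Tstar : H1 →L[ℂ] F) : Prop :=
  ∀ ψ φ : H1, ⟪Tstar ψ, c.j1 φ⟫ = ⟪c.j1 ψ, T φ⟫

/-- `G_{n,z} := (A_n R_{z̄})* ∈ 𝔅(𝔉)`. -/
def Gn (An : H1 →L[ℂ] F) (z : ℂ) : F →L[ℂ] F :=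
  ContinuousLinearMap.adjoint (An.comp (c.RF (starRingEnd ℂ z)))

/-- `B = A_n R A_n* ∈ 𝔅(𝔉)`: since `R A_n*ψ = G_{n,λ∘}ψ ∈ 𝔥₁`, the operator `B` is
`A_n` applied to the lift of `G_{n,λ∘}ψ`. -/
def IsAnRAn (lam : ℝ) (An : H1 →L[ℂ] F) (B : F →L[ℂ] F) : Prop :=
  ∀ ψ : F, ∃ φ : H1, c.j1 φ = c.Gn An (lam : ℂ) ψ ∧ B ψ = An φ

/-- `𝔾_{n,z}` as a bounded operator `𝔉⊕𝔉 → 𝔉`, `ψ⊕φ ↦ G_{n,z}ψ + R_zφ`. -/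
def Gnb (An : H1 →L[ℂ] F) (z : ℂ) : (F × F) →L[ℂ] F :=
  (c.Gn An z).comp (ContinuousLinearMap.fst ℂ F F) +
    (c.j1.comp (c.RF z)).comp (ContinuousLinearMap.snd ℂ F F)

/-- `𝔾_{n,z̄}* : 𝔉 → 𝔉⊕𝔉`, `ψ ↦ (A_n R_z ψ) ⊕ (R_z ψ)`. -/
def Gnbstar (An : H1 →L[ℂ] F) (z : ℂ) : F →L[ℂ] (F × F) :=
  (An.comp (c.RF z)).prod (c.j1.comp (c.RF z))

/-- `M_{n,z} = 𝔸_n(𝔾_n - 𝔾_{n,z}) = (z-λ∘)𝔾_n*𝔾_{n,z} : 𝔉⊕𝔉 → 𝔉⊕𝔥₁ ⊆ 𝔉⊕𝔉`. -/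
def Mn (lam : ℝ) (An : H1 →L[ℂ] F) (z : ℂ) : (F × F) →L[ℂ] (F × F) :=
  (z - (lam : ℂ)) • ((c.Gnbstar An (lam : ℂ)).comp (c.Gnb An z))

/-- `Θ_n = [[E_n - A_nRA_n*, 1-G_n*],[1-G_n, -R]] : 𝔉⊕𝔉 → 𝔉⊕𝔉`. -/
def Thetan (lam : ℝ) (An : H1 →L[ℂ] F) (En AnRAn : F →L[ℂ] F) :
    (F × F) →L[ℂ] (F × F) :=
  ((En - AnRAn).comp (ContinuousLinearMap.fst ℂ F F) +
      ((1 : F →L[ℂ] F) - An.comp (c.RF (lam : ℂ))).comp (ContinuousLinearMap.snd ℂ F F)).prod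
    (((1 : F →L[ℂ] F) - c.Gn An (lam : ℂ)).comp (ContinuousLinearMap.fst ℂ F F) -
      (c.j1.comp (c.RF (lam : ℂ))).comp (ContinuousLinearMap.snd ℂ F F))

end Ctx

namespace Ctx

variable (c : Ctx F H1 Hm1)

lemma conj_mem_res {z : ℂ} (hz : z ∈ c.res) : (starRingEnd ℂ z) ∈ c.res := by
  by_cases him : z.im = 0
  · rwa [Complex.conj_eq_iff_im.mpr him]
  · exact c.res_nonreal _ (by simp [him])

lemma pair_sub' (x y : Hm1) (φ : H1) :
    c.pair (x - y) φ = c.pair x φ - c.pair y φ := by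
  have h : x - y = x + (-1 : ℂ) • y := by simp [sub_eq_add_neg]
  rw [h, c.pair_add, c.pair_smul]; simp [sub_eq_add_neg]

lemma pair_Hbar (u : F) (φ : H1) : c.pair (c.Hbar u) φ = ⟪u, c.Hop φ⟫ := by
  have hcont1 : Continuous fun u : F => c.pair (c.Hbar u) φ :=
    (c.pair_cont φ).comp c.Hbar.continuous
  have hcont2 : Continuous fun u : F => (⟪u, c.Hop φ⟫ : ℂ) :=
    continuous_inner.comp (continuous_id.prodMk continuous_const)
  have heq : Set.EqOn (fun u : F => c.pair (c.Hbar u) φ)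
      (fun u : F => (⟪u, c.Hop φ⟫ : ℂ)) (Set.range c.j1) := by
    rintro _ ⟨w, rfl⟩
    have h1 : c.Hbar (c.j1 w) = c.jm (c.Hop w) :=
      congrFun (congrArg DFunLike.coe c.Hbar_ext) w
    simp only [h1, c.pair_jm]
    exact (c.Hsymm w φ).symm
  exact congrFun (Continuous.ext_on c.j1_dense hcont1 hcont2 heq) u

lemma pair_RF' (z : ℂ) (hz : z ∈ c.res) (x : Hm1) (χ : F) :
    c.pair x (c.RF (starRingEnd ℂ z) χ) = ⟪c.RM z x, χ⟫ := by
  set u := c.RM z x with hu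
  have hx : x = z • c.jm u - c.Hbar u := by
    have h := congrFun (congrArg DFunLike.coe (c.RM_inv_right z hz)) x
    simpa using h.symm
  set φ := c.RF (starRingEnd ℂ z) χ with hφ
  have h1 : c.pair x φ = ⟪u, (starRingEnd ℂ z) • c.j1 φ - c.Hop φ⟫ := by
    rw [hx, c.pair_sub', c.pair_smul, c.pair_jm, c.pair_Hbar, inner_sub_right,
      inner_smul_right]
  have h2 : (starRingEnd ℂ z) • c.j1 φ - c.Hop φ = χ := by
    have h := congrFun (congrArg DFunLike.coe
      (c.RF_inv_right (starRingEnd ℂ z) (c.conj_mem_res hz))) χ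
    simpa using h
  rw [h1, h2]

lemma G_eq_RM_Astar (z : ℂ) (hz : z ∈ c.res) (ψ : F) :
    c.G z ψ = c.RM z (c.Astar ψ) := by
  apply ext_inner_right ℂ
  intro χ
  rw [Ctx.G, ContinuousLinearMap.adjoint_inner_left]
  simp only [ContinuousLinearMap.comp_apply]
  rw [← c.Astar_spec, c.pair_RF' z hz]

lemma Astar_of_G (z : ℂ) (hz : z ∈ c.res) (ψ : F) :
    c.Astar ψ = z • c.jm (c.G z ψ) - c.Hbar (c.G z ψ) := by
  have h := congrFun (congrArg DFunLike.coe (c.RM_inv_right z hz)) (c.Astar ψ)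
  rw [c.G_eq_RM_Astar z hz]
  simpa using h.symm

lemma G_zero_iff (z : ℂ) (hz : z ∈ c.res) (ψ : F) :
    c.G z ψ = 0 ↔ c.Astar ψ = 0 := by
  constructor
  · intro h
    rw [c.Astar_of_G z hz, h]; simp
  · intro h
    rw [c.G_eq_RM_Astar z hz, h]; simp

lemma key_iff (z : ℂ) (hz : z ∈ c.res) :
    (∀ (ψ : F) (φ : H1), c.G z ψ = c.j1 φ → c.G z ψ = 0) ↔
      (∀ (ψ χ : F), c.Astar ψ = c.jm χ → c.Astar ψ = 0) := by
  constructor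
  · intro hG ψ χ hA
    have hGψ : c.G z ψ = c.j1 (c.RF z χ) := by
      rw [c.G_eq_RM_Astar z hz, hA]
      exact congrFun (congrArg DFunLike.coe (c.RM_ext z hz)) χ
    exact (c.G_zero_iff z hz ψ).mp (hG ψ _ hGψ)
  · intro hA ψ φ hG
    have hAψ : c.Astar ψ = c.jm (z • c.j1 φ - c.Hop φ) := by
      rw [c.Astar_of_G z hz, hG]
      have h := congrFun (congrArg DFunLike.coe c.Hbar_ext) φ
      simp only [ContinuousLinearMap.comp_apply] at h
      rw [h, map_sub, map_smul]
    exact (c.G_zero_iff z hz ψ).mpr (hA ψ _ hAψ)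

end Ctx

/-- (i) If `ran(G_{z∘}) ∩ 𝔥₁ = {0}` for a single `z∘ ∈ ρ(H)`, then
`ran(G_z) ∩ 𝔥₁ = {0}` for every `z ∈ ρ(H)`.  (ii) For `z ∈ ρ(H)`,
`ran(G_z) ∩ 𝔥₁ = {0}` if and only if `ran(A*) ∩ 𝔉 = {0}`. -/
theorem statement1 (c : Ctx F H1 Hm1) :
    ((∃ z₀ ∈ c.res, ∀ (ψ : F) (φ : H1), c.G z₀ ψ = c.j1 φ → c.G z₀ ψ = 0) →
      ∀ z ∈ c.res, ∀ (ψ : F) (φ : H1), c.G z ψ = c.j1 φ → c.G z ψ = 0) ∧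
    (∀ z ∈ c.res,
      ((∀ (ψ : F) (φ : H1), c.G z ψ = c.j1 φ → c.G z ψ = 0) ↔
        (∀ (ψ χ : F), c.Astar ψ = c.jm χ → c.Astar ψ = 0))) := by
  exact
  ⟨fun ⟨z₀, hz₀, h⟩ z hz => (c.key_iff z hz).mpr ((c.key_iff z₀ hz₀).mp h),
   fun z hz => c.key_iff z hz⟩
end
end

section
/- If A ∈ 𝔅(𝔥_s,𝔉) for some s ∈ (0,1), then both 1−G_λ and 1−G_λ* have bounded inverses in 𝔅(𝔉) whenever λ < λ_inf − max{√(λ_inf² + 1), ‖A‖_{𝔅(𝔥_s,𝔉)}^{1/(1−s)}}. (Indeed for such λ one has ‖G_λ‖_{𝔅(𝔉)} = ‖G_λ*‖_{𝔅(𝔉)} < 1.) -/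
open scoped InnerProductSpace ComplexConjugate

noncomputable section

local notation "⟪" x ", " y "⟫" => @inner ℂ _ _ x y

variable {F H1 Hm1 : Type*}
  [NormedAddCommGroup F] [InnerProductSpace ℂ F] [CompleteSpace F]
  [NormedAddCommGroup H1] [InnerProductSpace ℂ H1] [CompleteSpace H1]
  [NormedAddCommGroup Hm1] [InnerProductSpace ℂ Hm1] [CompleteSpace Hm1]

section Statement3Aux

variable (c : Ctx F H1 Hm1)

private lemma rfL (z : ℂ) (hz : z ∈ c.res) (φ : H1) :
    c.RF z (z • c.j1 φ - c.Hop φ) = φ := by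
  have := congrArg (fun T : H1 →L[ℂ] H1 => T φ) (c.RF_inv_left z hz)
  simpa using this

private lemma rfR (z : ℂ) (hz : z ∈ c.res) (ψ : F) :
    z • c.j1 (c.RF z ψ) - c.Hop (c.RF z ψ) = ψ := by
  have := congrArg (fun T : F →L[ℂ] F => T ψ) (c.RF_inv_right z hz)
  simpa using this

private lemma jRF_selfAdjoint (μ : ℝ) (hμ : (μ:ℂ) ∈ c.res) :
    IsSelfAdjoint (c.j1.comp (c.RF (μ:ℂ))) := by
  rw [ContinuousLinearMap.isSelfAdjoint_iff_isSymmetric]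
  intro ψ χ
  simp only [ContinuousLinearMap.coe_coe, ContinuousLinearMap.comp_apply]
  have hψ := rfR c (μ:ℂ) hμ ψ
  have hχ := rfR c (μ:ℂ) hμ χ
  calc ⟪c.j1 (c.RF (μ:ℂ) ψ), χ⟫
      = ⟪c.j1 (c.RF (μ:ℂ) ψ), (μ:ℂ) • c.j1 (c.RF (μ:ℂ) χ) - c.Hop (c.RF (μ:ℂ) χ)⟫ := by
        rw [hχ]
    _ = (μ:ℂ) * ⟪c.j1 (c.RF (μ:ℂ) ψ), c.j1 (c.RF (μ:ℂ) χ)⟫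
        - ⟪c.Hop (c.RF (μ:ℂ) ψ), c.j1 (c.RF (μ:ℂ) χ)⟫ := by
        rw [inner_sub_right, inner_smul_right, c.Hsymm]
    _ = ⟪(μ:ℂ) • c.j1 (c.RF (μ:ℂ) ψ) - c.Hop (c.RF (μ:ℂ) ψ), c.j1 (c.RF (μ:ℂ) χ)⟫ := by
        rw [inner_sub_left, inner_smul_left, Complex.conj_ofReal]
    _ = ⟪ψ, c.j1 (c.RF (μ:ℂ) χ)⟫ := by rw [hψ]

private lemma shift_unit (μ : ℝ) (hμ : (μ:ℂ) ∈ c.res) (b : ℝ) (hb : b ≠ 0)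
    (hμ' : ((μ - 1/b : ℝ):ℂ) ∈ c.res) :
    IsUnit ((algebraMap ℂ (F →L[ℂ] F)) (b:ℂ) - c.j1.comp (c.RF (μ:ℂ))) := by
  set μ' : ℝ := μ - 1/b with hμ'def
  have hbC : (b:ℂ) ≠ 0 := by exact_mod_cast hb
  have hcast : (μ':ℂ) = (μ:ℂ) - ((b:ℂ))⁻¹ := by
    rw [hμ'def]; push_cast; ring
  set C : F →L[ℂ] F := ((b:ℂ))⁻¹ • (((μ:ℂ) • c.j1 - c.Hop).comp (c.RF (μ':ℂ)))
  refine ⟨⟨_, C, ?_, ?_⟩, rfl⟩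
  · ext χ
    set ρ := c.RF (μ':ℂ) χ with hρdef
    have hCχ : C χ = ((b:ℂ))⁻¹ • ((μ:ℂ) • c.j1 ρ - c.Hop ρ) := by
      simp [C, ContinuousLinearMap.smul_apply, ContinuousLinearMap.comp_apply,
        ContinuousLinearMap.sub_apply, hρdef]
    have hRFC : c.RF (μ:ℂ) (C χ) = ((b:ℂ))⁻¹ • ρ := by
      rw [hCχ, map_smul, rfL c (μ:ℂ) hμ ρ]
    show (b:ℂ) • C χ - c.j1 (c.RF (μ:ℂ) (C χ)) = χ
    rw [hRFC, hCχ, smul_smul, mul_inv_cancel₀ hbC, one_smul, map_smul]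
    have h2 := rfR c (μ':ℂ) hμ' χ
    rw [← hρdef] at h2
    rw [← h2, hcast]
    module
  · ext ψ
    set φ := c.RF (μ:ℂ) ψ with hφdef
    have h1 := rfR c (μ:ℂ) hμ ψ
    rw [← hφdef] at h1
    have hBψ : (b:ℂ) • ψ - c.j1 φ = (b:ℂ) • ((μ':ℂ) • c.j1 φ - c.Hop φ) := by
      have hbμ' : (b:ℂ) * (μ':ℂ) = (b:ℂ) * (μ:ℂ) - 1 := by
        rw [hcast]; field_simp
      rw [← h1, smul_sub, smul_sub, smul_smul, smul_smul, hbμ', sub_smul, one_smul]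
      abel
    have hRF' : c.RF (μ':ℂ) ((b:ℂ) • ψ - c.j1 φ) = (b:ℂ) • φ := by
      rw [hBψ, map_smul, rfL c (μ':ℂ) hμ' φ]
    show C ((b:ℂ) • ψ - c.j1 (c.RF (μ:ℂ) ψ)) = ψ
    have hCv : C ((b:ℂ) • ψ - c.j1 φ)
        = ((b:ℂ))⁻¹ • ((μ:ℂ) • c.j1 (c.RF (μ':ℂ) ((b:ℂ) • ψ - c.j1 φ))
          - c.Hop (c.RF (μ':ℂ) ((b:ℂ) • ψ - c.j1 φ))) := by
      simp [C, ContinuousLinearMap.smul_apply, ContinuousLinearMap.comp_apply,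
        ContinuousLinearMap.sub_apply]
    rw [← hφdef, hCv, hRF', map_smul, map_smul, smul_comm ((μ:ℂ)) ((b:ℂ)), ← smul_sub,
      smul_smul, inv_mul_cancel₀ hbC, one_smul, h1]

private lemma jRF_norm_le (μ : ℝ) (hμ : μ < c.lamInf) :
    ‖c.j1.comp (c.RF (μ:ℂ))‖ ≤ (c.lamInf - μ)⁻¹ := by
  have hκpos : (0:ℝ) < c.lamInf - μ := by linarith
  have hκ0 : (0:ℝ) ≤ (c.lamInf - μ)⁻¹ := by positivity
  have hres : (μ:ℂ) ∈ c.res := c.res_below μ hμ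
  set B := c.j1.comp (c.RF (μ:ℂ)) with hBdef
  have hsa : IsSelfAdjoint B := jRF_selfAdjoint c μ hres
  have hspec : ∀ z ∈ spectrum ℂ B, ‖z‖₊ ≤ ((c.lamInf - μ)⁻¹).toNNReal := by
    intro z hz
    have hzre : z = (z.re : ℂ) := hsa.mem_spectrum_eq_re hz
    set b := z.re with hbdef
    have hznorm : ‖z‖ = |b| := by rw [hzre]; exact Complex.norm_real b
    rcases eq_or_ne b 0 with hb0 | hb0
    · have : ‖z‖ = 0 := by rw [hznorm, hb0, abs_zero]
      simp [← NNReal.coe_le_coe, coe_nnnorm, this, hκ0]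
    · have hnotlt : ¬ (μ - 1/b < c.lamInf) := by
        intro hlt
        have hres' : ((μ - 1/b : ℝ):ℂ) ∈ c.res := c.res_below _ hlt
        have hunit := shift_unit c μ hres b hb0 hres'
        rw [spectrum.mem_iff] at hz
        rw [hzre] at hz
        exact hz hunit
      push_neg at hnotlt
      have h1b : 1/b ≤ μ - c.lamInf := by linarith
      have hbneg : b < 0 := by
        rcases lt_or_gt_of_ne hb0 with h | h
        · exact h
        · exfalso
          have : (0:ℝ) < 1/b := by positivity
          linarith
      have habs : |b| ≤ (c.lamInf - μ)⁻¹ := by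
        rw [abs_of_neg hbneg, inv_eq_one_div, le_div_iff₀ hκpos]
        have hmul : b * (1/b) = 1 := mul_one_div_cancel hb0
        nlinarith
      rw [← NNReal.coe_le_coe, coe_nnnorm, hznorm, Real.coe_toNNReal _ hκ0]
      exact habs
  have hrad : spectralRadius ℂ B ≤ (((c.lamInf - μ)⁻¹).toNNReal : ENNReal) := by
    rw [spectralRadius]
    exact iSup₂_le fun z hz => by exact_mod_cast hspec z hz
  rw [hsa.spectralRadius_eq_nnnorm] at hrad
  have := ENNReal.coe_le_coe.mp hrad
  calc ‖B‖ = (‖B‖₊ : ℝ) := (coe_nnnorm B).symm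
    _ ≤ (((c.lamInf - μ)⁻¹).toNNReal : ℝ) := NNReal.coe_le_coe.mpr this
    _ = (c.lamInf - μ)⁻¹ := Real.coe_toNNReal _ hκ0

private lemma jRF_apply_le (μ : ℝ) (hμ : μ < c.lamInf) (ψ : F) :
    ‖c.j1 (c.RF (μ:ℂ) ψ)‖ ≤ (c.lamInf - μ)⁻¹ * ‖ψ‖ := by
  have h1 : ‖(c.j1.comp (c.RF (μ:ℂ))) ψ‖ ≤ ‖c.j1.comp (c.RF (μ:ℂ))‖ * ‖ψ‖ :=
    (c.j1.comp (c.RF (μ:ℂ))).le_opNorm ψ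
  simp only [ContinuousLinearMap.comp_apply] at h1
  calc ‖c.j1 (c.RF (μ:ℂ) ψ)‖ ≤ ‖c.j1.comp (c.RF (μ:ℂ))‖ * ‖ψ‖ := h1
    _ ≤ (c.lamInf - μ)⁻¹ * ‖ψ‖ :=
      mul_le_mul_of_nonneg_right (jRF_norm_le c μ hμ) (norm_nonneg ψ)

private lemma norm_smul_sub_sq (μ : ℝ) (x y : F) :
    ‖(μ:ℂ) • x - y‖ ^ 2 = μ^2 * ‖x‖^2 - 2 * μ * (⟪x, y⟫ : ℂ).re + ‖y‖^2 := by
  have h := @norm_sub_sq ℂ F _ _ _ ((μ:ℂ) • x) y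
  have h1 : ‖(μ:ℂ) • x‖ ^ 2 = μ^2 * ‖x‖^2 := by
    rw [norm_smul, Complex.norm_real, Real.norm_eq_abs, mul_pow, sq_abs]
  have h2 : RCLike.re (⟪(μ:ℂ) • x, y⟫ : ℂ) = μ * (⟪x, y⟫ : ℂ).re := by
    rw [inner_smul_left, Complex.conj_ofReal]
    simp [Complex.re_ofReal_mul, RCLike.re_to_complex]
  rw [h, h1, h2]; ring

private lemma form_lower_bound (φ : H1) :
    c.lamInf * ‖c.j1 φ‖^2 ≤ (⟪c.j1 φ, c.Hop φ⟫ : ℂ).re := by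
  set n := ‖c.j1 φ‖^2 with hn
  set u := (⟪c.j1 φ, c.Hop φ⟫ : ℂ).re with hu
  set h2 := ‖c.Hop φ‖^2 with hh2
  have hn0 : 0 ≤ n := sq_nonneg _
  have key : ∀ μ : ℝ, μ < c.lamInf → (c.lamInf - μ)^2 * n ≤ μ^2 * n - 2*μ*u + h2 := by
    intro μ hμ
    have hres : (μ:ℂ) ∈ c.res := c.res_below μ hμ
    have hRF : c.RF (μ:ℂ) ((μ:ℂ) • c.j1 φ - c.Hop φ) = φ := rfL c (μ:ℂ) hres φ
    have hb := jRF_apply_le c μ hμ ((μ:ℂ) • c.j1 φ - c.Hop φ)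
    rw [hRF] at hb
    have hκpos : (0:ℝ) < c.lamInf - μ := by linarith
    have hb2 : (c.lamInf - μ) * ‖c.j1 φ‖ ≤ ‖(μ:ℂ) • c.j1 φ - c.Hop φ‖ := by
      have h' := mul_le_mul_of_nonneg_left hb (le_of_lt hκpos)
      rwa [← mul_assoc, mul_inv_cancel₀ (ne_of_gt hκpos), one_mul] at h'
    have hsq : ((c.lamInf - μ) * ‖c.j1 φ‖)^2 ≤ ‖(μ:ℂ) • c.j1 φ - c.Hop φ‖^2 :=
      pow_le_pow_left₀ (by positivity) hb2 2
    rw [norm_smul_sub_sq] at hsq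
    calc (c.lamInf - μ)^2 * n = ((c.lamInf - μ) * ‖c.j1 φ‖)^2 := by rw [hn]; ring
      _ ≤ μ^2 * ‖c.j1 φ‖^2 - 2*μ*u + h2 := hsq
      _ = μ^2 * n - 2*μ*u + h2 := by rw [hn]

  by_contra hcon
  push_neg at hcon
  set d := c.lamInf * n - u with hd
  have hdpos : 0 < d := by rw [hd]; linarith
  set μ0 := min (c.lamInf - 1) ((c.lamInf^2*n - h2)/(2*d) - 1) with hμ0
  have hμ0lt : μ0 < c.lamInf := lt_of_le_of_lt (min_le_left _ _) (by linarith)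
  have hk := key μ0 hμ0lt
  have hμ0le : μ0 ≤ (c.lamInf^2*n - h2)/(2*d) - 1 := min_le_right _ _
  have h2d : 2*μ0*d ≥ c.lamInf^2*n - h2 := by nlinarith [hk]
  have : μ0 * (2*d) ≤ ((c.lamInf^2*n - h2)/(2*d) - 1) * (2*d) :=
    mul_le_mul_of_nonneg_right hμ0le (by linarith)
  rw [sub_mul, div_mul_cancel₀ _ (by linarith : (2*d) ≠ 0)] at this
  nlinarith

private lemma RF_graph_le (lam : ℝ) (hlt : lam < c.lamInf) (hneg : lam ≤ 0)
    (hsq : c.lamInf^2 + 1 ≤ (c.lamInf - lam)^2) (ψ : F) :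
    ‖c.RF (lam:ℂ) ψ‖ ≤ ‖ψ‖ := by
  have hres : (lam:ℂ) ∈ c.res := c.res_below lam hlt
  set φ := c.RF (lam:ℂ) ψ with hφ
  have h1 : (lam:ℂ) • c.j1 φ - c.Hop φ = ψ := rfR c (lam:ℂ) hres ψ
  have hψ2 : ‖ψ‖^2 = lam^2 * ‖c.j1 φ‖^2 - 2*lam*(⟪c.j1 φ, c.Hop φ⟫ : ℂ).re + ‖c.Hop φ‖^2 := by
    rw [← h1, norm_smul_sub_sq]
  have hφ2 : ‖φ‖^2 = ‖c.j1 φ‖^2 + ‖c.Hop φ‖^2 := c.norm1_sq φ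
  have hform : c.lamInf * ‖c.j1 φ‖^2 ≤ (⟪c.j1 φ, c.Hop φ⟫ : ℂ).re := form_lower_bound c φ
  have hsqle : ‖φ‖^2 ≤ ‖ψ‖^2 := by
    have hnr : (0:ℝ) ≤ ‖c.j1 φ‖^2 := sq_nonneg _
    have p2 : (-2*lam) * (c.lamInf * ‖c.j1 φ‖^2) ≤ (-2*lam) * (⟪c.j1 φ, c.Hop φ⟫ : ℂ).re :=
      mul_le_mul_of_nonneg_left hform (by linarith)
    nlinarith [mul_le_mul_of_nonneg_right hsq hnr]
  calc ‖φ‖ = √(‖φ‖^2) := (Real.sqrt_sq (norm_nonneg φ)).symm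
    _ ≤ √(‖ψ‖^2) := Real.sqrt_le_sqrt hsqle
    _ = ‖ψ‖ := Real.sqrt_sq (norm_nonneg ψ)

end Statement3Aux

/-- If `A ∈ 𝔅(𝔥_s,𝔉)` for some `s ∈ (0,1)`, then both `1-G_λ` and `1-G_λ*`
have bounded inverses in `𝔅(𝔉)` whenever
`λ < λ_inf - max{√(λ_inf² + 1), ‖A‖_{𝔅(𝔥_s,𝔉)}^(1/(1-s))}`; indeed for such `λ` one has
`‖G_λ‖ = ‖G_λ*‖ < 1`.  (Here `CA` is any bound for `‖A‖_{𝔅(𝔥_s,𝔉)}`.) -/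
theorem statement3 (c : Ctx F H1 Hm1)
    (s : ℝ) (hs : s ∈ Set.Ioo (0 : ℝ) 1)
    (CA : ℝ) (hCA : 0 ≤ CA) (hA : ∀ ψ : H1, ‖c.A ψ‖ ≤ CA * c.ns s ψ)
    (lam : ℝ)
    (hlam : lam < c.lamInf - max (Real.sqrt (c.lamInf ^ 2 + 1)) (CA ^ (1 / (1 - s)))) :
    ‖c.G (lam : ℂ)‖ = ‖c.Gst lam‖ ∧ ‖c.G (lam : ℂ)‖ < 1 ∧
    IsUnit ((1 : F →L[ℂ] F) - c.G (lam : ℂ)) ∧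
    IsUnit ((1 : F →L[ℂ] F) - c.Gst lam) := by
  obtain ⟨hs0, hs1⟩ := hs
  set m := max (Real.sqrt (c.lamInf ^ 2 + 1)) (CA ^ (1 / (1 - s))) with hm
  have hsqrtm : Real.sqrt (c.lamInf ^ 2 + 1) ≤ m := le_max_left _ _
  have hCAm : CA ^ (1 / (1 - s)) ≤ m := le_max_right _ _
  have hsqrt1 : (1:ℝ) ≤ Real.sqrt (c.lamInf ^ 2 + 1) := by
    have h' := Real.sqrt_le_sqrt (show (1:ℝ) ≤ c.lamInf^2+1 by nlinarith [sq_nonneg c.lamInf])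
    rwa [Real.sqrt_one] at h'
  have habs : |c.lamInf| ≤ Real.sqrt (c.lamInf ^ 2 + 1) := by
    have h' := Real.sqrt_le_sqrt (show c.lamInf^2 ≤ c.lamInf^2+1 by linarith)
    rwa [Real.sqrt_sq_eq_abs] at h'
  have hDm : m < c.lamInf - lam := by linarith
  have hlt : lam < c.lamInf := by
    have : (0:ℝ) ≤ m := le_trans (by linarith) hsqrtm
    linarith
  have hneg : lam ≤ 0 := by
    have h1 : c.lamInf ≤ |c.lamInf| := le_abs_self _
    linarith
  have hDpos : (0:ℝ) < c.lamInf - lam := by linarith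
  have hD1 : (1:ℝ) < c.lamInf - lam := by linarith
  have hsq : c.lamInf^2 + 1 ≤ (c.lamInf - lam)^2 := by
    have h0 : Real.sqrt (c.lamInf ^ 2 + 1) ≤ c.lamInf - lam := by linarith
    have := pow_le_pow_left₀ (Real.sqrt_nonneg _) h0 2
    rwa [Real.sq_sqrt (by positivity)] at this
  -- the key operator T = A ∘ RF lam and its norm bound
  set T := c.A.comp (c.RF (lam:ℂ)) with hT
  set D : ℝ := (c.lamInf - lam) ^ (1 - s) with hD
  have hDrpos : 0 < D := Real.rpow_pos_of_pos hDpos _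
  set k : ℝ := CA / D with hk
  have hk0 : 0 ≤ k := div_nonneg hCA (le_of_lt hDrpos)
  have hbound : ∀ ψ : F, ‖T ψ‖ ≤ k * ‖ψ‖ := by
    intro ψ
    have e1 : T ψ = c.A (c.RF (lam:ℂ) ψ) := rfl
    have e2 : ‖c.A (c.RF (lam:ℂ) ψ)‖ ≤ CA * c.ns s (c.RF (lam:ℂ) ψ) := hA _
    have e3 : c.ns s (c.RF (lam:ℂ) ψ) ≤
        ‖c.RF (lam:ℂ) ψ‖ ^ s * ‖c.j1 (c.RF (lam:ℂ) ψ)‖ ^ (1 - s) :=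
      c.ns_interp s (le_of_lt hs0) (le_of_lt hs1) _
    have e4 : ‖c.RF (lam:ℂ) ψ‖ ^ s ≤ ‖ψ‖ ^ s :=
      Real.rpow_le_rpow (norm_nonneg _) (RF_graph_le c lam hlt hneg hsq ψ) (le_of_lt hs0)
    have e5 : ‖c.j1 (c.RF (lam:ℂ) ψ)‖ ^ (1-s) ≤ ((c.lamInf - lam)⁻¹ * ‖ψ‖) ^ (1-s) :=
      Real.rpow_le_rpow (norm_nonneg _) (jRF_apply_le c lam hlt ψ) (by linarith)
    have e6 : ((c.lamInf - lam)⁻¹ * ‖ψ‖) ^ (1-s)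
        = D⁻¹ * ‖ψ‖ ^ (1-s) := by
      rw [Real.mul_rpow (by positivity) (norm_nonneg _),
        Real.inv_rpow (le_of_lt hDpos)]
    have e7 : ‖ψ‖ ^ s * ‖ψ‖ ^ (1-s) = ‖ψ‖ := by
      rw [← Real.rpow_add' (norm_nonneg _) (by norm_num : s + (1-s) ≠ 0),
        show s + (1-s) = (1:ℝ) by ring, Real.rpow_one]
    have e8 : c.ns s (c.RF (lam:ℂ) ψ) ≤ D⁻¹ * ‖ψ‖ := by
      calc c.ns s (c.RF (lam:ℂ) ψ)
          ≤ ‖c.RF (lam:ℂ) ψ‖ ^ s * ‖c.j1 (c.RF (lam:ℂ) ψ)‖ ^ (1 - s) := e3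
        _ ≤ ‖ψ‖ ^ s * (((c.lamInf - lam)⁻¹ * ‖ψ‖) ^ (1-s)) := by
            apply mul_le_mul e4 e5 (Real.rpow_nonneg (norm_nonneg _) _)
              (Real.rpow_nonneg (norm_nonneg _) _)
        _ = D⁻¹ * (‖ψ‖ ^ s * ‖ψ‖ ^ (1-s)) := by rw [e6]; ring
        _ = D⁻¹ * ‖ψ‖ := by rw [e7]
    calc ‖T ψ‖ = ‖c.A (c.RF (lam:ℂ) ψ)‖ := by rw [e1]
      _ ≤ CA * c.ns s (c.RF (lam:ℂ) ψ) := e2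
      _ ≤ CA * (D⁻¹ * ‖ψ‖) := mul_le_mul_of_nonneg_left e8 hCA
      _ = k * ‖ψ‖ := by rw [hk]; ring
  have hTnorm : ‖T‖ ≤ k := ContinuousLinearMap.opNorm_le_bound T hk0 hbound
  have hCAD : CA < D := by
    have h1 : CA ^ (1 / (1 - s)) < c.lamInf - lam := lt_of_le_of_lt hCAm hDm
    have h2 : (CA ^ (1 / (1 - s))) ^ (1 - s) < D := by
      rw [hD]
      exact Real.rpow_lt_rpow (Real.rpow_nonneg hCA _) h1 (by linarith)
    have h3 : (CA ^ (1 / (1 - s))) ^ (1 - s) = CA := by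
      rw [← Real.rpow_mul hCA, one_div,
        inv_mul_cancel₀ (by linarith : (1:ℝ) - s ≠ 0), Real.rpow_one]
    rwa [h3] at h2
  have hk1 : k < 1 := by
    rw [hk, div_lt_one hDrpos]; exact hCAD
  have hT1 : ‖T‖ < 1 := lt_of_le_of_lt hTnorm hk1
  -- identify G lam with adjoint T
  have hGT : c.G (lam:ℂ) = ContinuousLinearMap.adjoint T := by
    rw [Ctx.G, hT, Complex.conj_ofReal]
  have hGnorm : ‖c.G (lam:ℂ)‖ = ‖T‖ := by
    rw [hGT]
    exact LinearIsometryEquiv.norm_map ContinuousLinearMap.adjoint T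
  have hGstnorm : ‖c.Gst lam‖ = ‖c.G (lam:ℂ)‖ := by
    rw [Ctx.Gst]
    exact LinearIsometryEquiv.norm_map ContinuousLinearMap.adjoint _
  have hG1 : ‖c.G (lam:ℂ)‖ < 1 := by rw [hGnorm]; exact hT1
  have hGst1 : ‖c.Gst lam‖ < 1 := by rw [hGstnorm]; exact hG1
  exact ⟨hGstnorm.symm, hG1,
    ⟨Units.oneSub _ hG1, rfl⟩, ⟨Units.oneSub _ hGst1, rfl⟩⟩
end
end

section
/- For every γ ∈ ℝ with |γ| ≥ 1 and every s ∈ [0,1] one has ‖R_{iγ}‖_{𝔅(𝔉,𝔥_s)} ≤ |γ|^{s−1}; consequently, if A ∈ 𝔅(𝔥_s,𝔉) for some s ∈ (0,1), then both 1−G_{iγ} and 1−G_{iγ}* have bounded inverses in 𝔅(𝔉) whenever |γ| > max{1, ‖A‖_{𝔅(𝔥_s,𝔉)}^{1/(1−s)}}. -/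
open scoped InnerProductSpace ComplexConjugate

noncomputable section

local notation "⟪" x ", " y "⟫" => @inner ℂ _ _ x y

variable {F H1 Hm1 : Type*}
  [NormedAddCommGroup F] [InnerProductSpace ℂ F] [CompleteSpace F]
  [NormedAddCommGroup H1] [InnerProductSpace ℂ H1] [CompleteSpace H1]
  [NormedAddCommGroup Hm1] [InnerProductSpace ℂ Hm1] [CompleteSpace Hm1]

lemma aux1 (c : Ctx F H1 Hm1) (γ : ℝ) (hγ : 1 ≤ |γ|) (s : ℝ) (hs0 : 0 ≤ s) (hs1 : s ≤ 1)
    (ψ : F) : c.ns s (c.RF ((γ : ℂ) * Complex.I) ψ) ≤ |γ| ^ (s - 1) * ‖ψ‖ := by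
  have hγ0 : (0:ℝ) < |γ| := lt_of_lt_of_le one_pos hγ
  have hγne : γ ≠ 0 := by
    intro h; rw [h] at hγ; simp at hγ; linarith
  set z : ℂ := (γ : ℂ) * Complex.I with hzdef
  have hz : z ∈ c.res := by
    apply c.res_nonreal
    simp [hzdef, Complex.mul_im, hγne]
  set φ := c.RF z ψ with hφdef
  have hinv : z • c.j1 φ - c.Hop φ = ψ := by
    have h := c.RF_inv_right z hz
    have h2 := congrArg (fun T => T ψ) h
    simpa [ContinuousLinearMap.comp_apply, ContinuousLinearMap.sub_apply,
      ContinuousLinearMap.smul_apply] using h2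
  have him : (⟪c.j1 φ, c.Hop φ⟫ : ℂ).im = 0 := by
    have h2 : (starRingEnd ℂ) ⟪c.j1 φ, c.Hop φ⟫ = ⟪c.j1 φ, c.Hop φ⟫ := by
      rw [inner_conj_symm]
      exact (c.Hsymm φ φ).symm
    exact Complex.conj_eq_iff_im.mp h2
  have hre : RCLike.re ⟪z • c.j1 φ, c.Hop φ⟫ = 0 := by
    rw [inner_smul_left]
    simp [hzdef, map_mul, Complex.conj_I, Complex.conj_ofReal, Complex.mul_re,
      Complex.mul_im, him]
  have hkey : ‖ψ‖ ^ 2 = γ ^ 2 * ‖c.j1 φ‖ ^ 2 + ‖c.Hop φ‖ ^ 2 := by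
    have h := norm_sub_sq (𝕜 := ℂ) (z • c.j1 φ) (c.Hop φ)
    rw [hinv, hre] at h
    have hzn : ‖z‖ = |γ| := by
      simp [hzdef, Complex.norm_real]
    rw [norm_smul, hzn] at h
    rw [h]; rw [mul_pow, sq_abs]; ring
  have hj : |γ| * ‖c.j1 φ‖ ≤ ‖ψ‖ := by
    nlinarith [norm_nonneg (c.j1 φ), norm_nonneg ψ, norm_nonneg (c.Hop φ), sq_abs γ,
      abs_nonneg γ, mul_nonneg (abs_nonneg γ) (norm_nonneg (c.j1 φ))]
  have hφψ : ‖φ‖ ≤ ‖ψ‖ := by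
    have h1 := c.norm1_sq φ
    have hγsq : 1 ≤ γ ^ 2 := by nlinarith [sq_abs γ]
    nlinarith [norm_nonneg φ, norm_nonneg ψ, norm_nonneg (c.j1 φ), norm_nonneg (c.Hop φ)]
  by_cases hψ0 : ψ = 0
  · subst hψ0
    rw [norm_zero, mul_zero]
    have h0 : φ = 0 := by rw [hφdef, map_zero]
    rw [h0]
    have := c.ns_mono s 1 hs0 hs1 le_rfl 0
    rw [c.ns_one] at this
    simpa using this
  · have hψ : 0 < ‖ψ‖ := norm_pos_iff.mpr hψ0
    have h2 : ‖c.j1 φ‖ ≤ ‖ψ‖ / |γ| := by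
      rw [le_div_iff₀ hγ0]; linarith [hj]
    calc c.ns s φ ≤ ‖φ‖ ^ s * ‖c.j1 φ‖ ^ (1 - s) := c.ns_interp s hs0 hs1 φ
      _ ≤ ‖ψ‖ ^ s * (‖ψ‖ / |γ|) ^ (1 - s) := by
          apply mul_le_mul (Real.rpow_le_rpow (norm_nonneg _) hφψ hs0)
            (Real.rpow_le_rpow (norm_nonneg _) h2 (by linarith))
            (Real.rpow_nonneg (norm_nonneg _) _) (Real.rpow_nonneg (norm_nonneg _) _)
      _ = |γ| ^ (s - 1) * ‖ψ‖ := by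
          rw [Real.div_rpow (norm_nonneg _) (abs_nonneg _),
            show s - 1 = -(1 - s) by ring, Real.rpow_neg (abs_nonneg _),
            div_eq_mul_inv, ← mul_assoc, ← Real.rpow_add hψ,
            show s + (1 - s) = 1 by ring, Real.rpow_one, mul_comm]

/-- For every `γ ∈ ℝ` with `|γ| ≥ 1` and every `s ∈ [0,1]` one has
`‖R_{iγ}‖_{𝔅(𝔉,𝔥_s)} ≤ |γ|^(s-1)`; consequently, if `A ∈ 𝔅(𝔥_s,𝔉)` for some `s ∈ (0,1)`,
then both `1-G_{iγ}` and `1-G_{iγ}*` have bounded inverses in `𝔅(𝔉)` whenever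
`|γ| > max{1, ‖A‖_{𝔅(𝔥_s,𝔉)}^(1/(1-s))}`. -/
theorem statement4 (c : Ctx F H1 Hm1) :
    (∀ γ : ℝ, 1 ≤ |γ| → ∀ s ∈ Set.Icc (0 : ℝ) 1, ∀ ψ : F,
      c.ns s (c.RF ((γ : ℂ) * Complex.I) ψ) ≤ |γ| ^ (s - 1) * ‖ψ‖) ∧
    (∀ s ∈ Set.Ioo (0 : ℝ) 1, ∀ CA : ℝ, 0 ≤ CA →
      (∀ ψ : H1, ‖c.A ψ‖ ≤ CA * c.ns s ψ) →
      ∀ γ : ℝ, max 1 (CA ^ (1 / (1 - s))) < |γ| →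
        IsUnit ((1 : F →L[ℂ] F) - c.G ((γ : ℂ) * Complex.I)) ∧
        IsUnit ((1 : F →L[ℂ] F) -
          ContinuousLinearMap.adjoint (c.G ((γ : ℂ) * Complex.I)))) := by
  constructor
  · intro γ hγ s hs ψ
    exact aux1 c γ hγ s hs.1 hs.2 ψ
  · intro s hs CA hCA hA γ hγmax
    obtain ⟨hs0, hs1⟩ := hs
    have hγ1 : 1 < |γ| := (le_max_left _ _).trans_lt hγmax
    have h1s : 0 < 1 - s := by linarith
    have hCAlt : CA < |γ| ^ (1 - s) := by
      have h1 : CA ^ (1 / (1 - s)) < |γ| := (le_max_right _ _).trans_lt hγmax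
      have h2 := Real.rpow_lt_rpow (Real.rpow_nonneg hCA _) h1 h1s
      rwa [← Real.rpow_mul hCA, one_div, inv_mul_cancel₀ h1s.ne', Real.rpow_one] at h2
    have hlt : CA * |γ| ^ (s - 1) < 1 := by
      have hx : (0:ℝ) < |γ| ^ (1 - s) := Real.rpow_pos_of_pos (by linarith) _
      rw [show s - 1 = -(1 - s) by ring, Real.rpow_neg (abs_nonneg _),
        ← div_eq_mul_inv, div_lt_one hx]
      exact hCAlt
    have hconj : starRingEnd ℂ ((γ:ℂ) * Complex.I) = (((-γ : ℝ)):ℂ) * Complex.I := by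
      simp [map_mul, Complex.conj_I, Complex.conj_ofReal]
    have hbound : ∀ ψ : F,
        ‖(c.A.comp (c.RF (starRingEnd ℂ ((γ:ℂ) * Complex.I)))) ψ‖
          ≤ (CA * |γ| ^ (s - 1)) * ‖ψ‖ := by
      intro ψ
      rw [hconj]
      calc ‖(c.A.comp (c.RF (((-γ : ℝ):ℂ) * Complex.I))) ψ‖
          ≤ CA * c.ns s (c.RF (((-γ : ℝ):ℂ) * Complex.I) ψ) := hA _
        _ ≤ CA * (|γ| ^ (s - 1) * ‖ψ‖) := by
            apply mul_le_mul_of_nonneg_left _ hCA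
            have h := aux1 c (-γ) (by rw [abs_neg]; exact hγ1.le) s hs0.le hs1.le ψ
            rwa [abs_neg] at h
        _ = (CA * |γ| ^ (s - 1)) * ‖ψ‖ := by ring
    have hGnorm : ‖c.G ((γ:ℂ) * Complex.I)‖ < 1 := by
      have hT : ‖c.A.comp (c.RF (starRingEnd ℂ ((γ:ℂ) * Complex.I)))‖
          ≤ CA * |γ| ^ (s - 1) := by
        apply ContinuousLinearMap.opNorm_le_bound _
          (mul_nonneg hCA (Real.rpow_nonneg (abs_nonneg _) _)) hbound
      have : ‖c.G ((γ:ℂ) * Complex.I)‖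
          = ‖c.A.comp (c.RF (starRingEnd ℂ ((γ:ℂ) * Complex.I)))‖ :=
        LinearIsometryEquiv.norm_map ContinuousLinearMap.adjoint _
      rw [this]
      exact lt_of_le_of_lt hT hlt
    have hGstnorm : ‖ContinuousLinearMap.adjoint (c.G ((γ:ℂ) * Complex.I))‖ < 1 := by
      rw [LinearIsometryEquiv.norm_map ContinuousLinearMap.adjoint]
      exact hGnorm
    exact ⟨⟨Units.oneSub _ hGnorm, rfl⟩, ⟨Units.oneSub _ hGstnorm, rfl⟩⟩
end
end

section
/- Assume (H3) and λ∘ ∈ Z_S, and for z ∈ Z_S set 𝕃_z := (Θ_S + M_z)^{-1} and R̂_z := R_z + 𝔾_z 𝕃_z 𝔾_{z̄}*. Then R̂ is a pseudo-resolvent, i.e. R̂_z − R̂_w = (w−z) R̂_z R̂_w for all z, w ∈ Z_S; moreover R̂_z* = R̂_{z̄} and ker(R̂_{λ∘}) = {0}. -/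
open scoped InnerProductSpace ComplexConjugate

noncomputable section

local notation "⟪" x ", " y "⟫" => @inner ℂ _ _ x y

variable {F H1 Hm1 : Type*}
  [NormedAddCommGroup F] [InnerProductSpace ℂ F] [CompleteSpace F]
  [NormedAddCommGroup H1] [InnerProductSpace ℂ H1] [CompleteSpace H1]
  [NormedAddCommGroup Hm1] [InnerProductSpace ℂ Hm1] [CompleteSpace Hm1]

namespace Ctx

variable (c : Ctx F H1 Hm1)

lemma RF_left {z : ℂ} (hz : z ∈ c.res) (ψ : H1) :
    c.RF z (z • c.j1 ψ - c.Hop ψ) = ψ := by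
  have := DFunLike.congr_fun (c.RF_inv_left z hz) ψ
  simpa using this

lemma RF_right {z : ℂ} (hz : z ∈ c.res) (χ : F) :
    z • c.j1 (c.RF z χ) - c.Hop (c.RF z χ) = χ := by
  have := DFunLike.congr_fun (c.RF_inv_right z hz) χ
  simpa using this

lemma RM_left {z : ℂ} (hz : z ∈ c.res) (χ : F) :
    c.RM z (z • c.jm χ - c.Hbar χ) = χ := by
  have := DFunLike.congr_fun (c.RM_inv_left z hz) χ
  simpa using this

lemma RM_right {z : ℂ} (hz : z ∈ c.res) (ξ : Hm1) :
    z • c.jm (c.RM z ξ) - c.Hbar (c.RM z ξ) = ξ := by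
  have := DFunLike.congr_fun (c.RM_inv_right z hz) ξ
  simpa using this

lemma RMjm {z : ℂ} (hz : z ∈ c.res) (χ : F) :
    c.RM z (c.jm χ) = c.j1 (c.RF z χ) := by
  have := DFunLike.congr_fun (c.RM_ext z hz) χ
  simpa using this

lemma res_conj {z : ℂ} (hz : z ∈ c.res) : (starRingEnd ℂ) z ∈ c.res := by
  by_cases him : z.im = 0
  · have : (starRingEnd ℂ) z = z := Complex.conj_eq_iff_im.mpr him
    rwa [this]
  · exact c.res_nonreal _ (by simpa using him)

lemma RF_sub {z w : ℂ} (hz : z ∈ c.res) (hw : w ∈ c.res) (χ : F) :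
    c.RF z χ - c.RF w χ = (w - z) • c.RF z (c.j1 (c.RF w χ)) := by
  symm
  calc (w - z) • c.RF z (c.j1 (c.RF w χ))
      = c.RF z ((w - z) • c.j1 (c.RF w χ)) := (map_smul _ _ _).symm
    _ = c.RF z ((w • c.j1 (c.RF w χ) - c.Hop (c.RF w χ))
          - (z • c.j1 (c.RF w χ) - c.Hop (c.RF w χ))) := by
        congr 1; rw [sub_smul]; abel
    _ = c.RF z (w • c.j1 (c.RF w χ) - c.Hop (c.RF w χ))
          - c.RF z (z • c.j1 (c.RF w χ) - c.Hop (c.RF w χ)) := map_sub _ _ _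
    _ = c.RF z χ - c.RF w χ := by rw [c.RF_right hw χ, c.RF_left hz (c.RF w χ)]

lemma RF_sub' {z w : ℂ} (hz : z ∈ c.res) (hw : w ∈ c.res) (χ : F) :
    c.RF z χ - c.RF w χ = (w - z) • c.RF w (c.j1 (c.RF z χ)) := by
  have := c.RF_sub hw hz χ
  have h2 : c.RF z χ - c.RF w χ = -(c.RF w χ - c.RF z χ) := by abel
  rw [h2, this, ← neg_smul]; ring_nf

lemma RF_comm {z w : ℂ} (hz : z ∈ c.res) (hw : w ∈ c.res) (χ : F) :
    c.RF z (c.j1 (c.RF w χ)) = c.RF w (c.j1 (c.RF z χ)) := by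
  by_cases h : z = w
  · subst h; rfl
  · have hne : w - z ≠ 0 := sub_ne_zero.mpr (Ne.symm h)
    apply smul_right_injective H1 hne
    simp only
    rw [← c.RF_sub hz hw χ, ← c.RF_sub' hz hw χ]

lemma inner_jRF {z : ℂ} (hz : z ∈ c.res) (χ χ' : F) :
    ⟪c.j1 (c.RF ((starRingEnd ℂ) z) χ), χ'⟫ = ⟪χ, c.j1 (c.RF z χ')⟫ := by
  have hzc : (starRingEnd ℂ) z ∈ c.res := c.res_conj hz
  set u := c.RF ((starRingEnd ℂ) z) χ with hu
  set v := c.RF z χ' with hvv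
  have h1 : χ' = z • c.j1 v - c.Hop v := (c.RF_right hz χ').symm
  have h2 : χ = (starRingEnd ℂ) z • c.j1 u - c.Hop u := (c.RF_right hzc χ).symm
  rw [h1, h2]
  rw [inner_sub_right, inner_smul_right, inner_sub_left, inner_smul_left,
    c.Hsymm u v]
  simp

end Ctx

namespace Ctx

lemma inner_G_left (c : Ctx F H1 Hm1) (z : ℂ) (ψ χ : F) :
    ⟪c.G z ψ, χ⟫ = ⟪ψ, c.A (c.RF ((starRingEnd ℂ) z) χ)⟫ := by
  rw [Ctx.G, ContinuousLinearMap.adjoint_inner_left]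
  rfl

lemma inner_G_right (c : Ctx F H1 Hm1) (z : ℂ) (ψ χ : F) :
    ⟪χ, c.G z ψ⟫ = ⟪c.A (c.RF ((starRingEnd ℂ) z) χ), ψ⟫ := by
  rw [Ctx.G, ContinuousLinearMap.adjoint_inner_right]
  rfl

lemma inner_jRF' (c : Ctx F H1 Hm1) {z : ℂ} (hz : z ∈ c.res) (χ χ' : F) :
    ⟪c.j1 (c.RF z χ), χ'⟫ = ⟪χ, c.j1 (c.RF ((starRingEnd ℂ) z) χ')⟫ := by
  have := c.inner_jRF (c.res_conj hz) χ χ'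
  simpa using this

lemma G_sub (c : Ctx F H1 Hm1) {z w : ℂ} (hz : z ∈ c.res) (hw : w ∈ c.res) (ψ : F) :
    c.G z ψ - c.G w ψ = (w - z) • c.j1 (c.RF z (c.G w ψ)) := by
  have hzc := c.res_conj hz
  have hwc := c.res_conj hw
  apply ext_inner_right ℂ
  intro χ
  rw [inner_sub_left, c.inner_G_left, c.inner_G_left, inner_smul_left]
  rw [c.inner_jRF' hz, c.inner_G_left]
  rw [← inner_sub_right, ← map_sub, ← inner_smul_right, ← map_smul]
  congr 2
  rw [c.RF_sub' hzc hwc χ]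
  simp [smul_smul, map_sub]

lemma RM_sub (c : Ctx F H1 Hm1) {z w : ℂ} (hz : z ∈ c.res) (hw : w ∈ c.res) (ξ : Hm1) :
    c.RM z ξ - c.RM w ξ = (w - z) • c.j1 (c.RF z (c.RM w ξ)) := by
  symm
  calc (w - z) • c.j1 (c.RF z (c.RM w ξ))
      = c.RM z ((w - z) • c.jm (c.RM w ξ)) := by rw [map_smul, c.RMjm hz]
    _ = c.RM z ((w • c.jm (c.RM w ξ) - c.Hbar (c.RM w ξ))
          - (z • c.jm (c.RM w ξ) - c.Hbar (c.RM w ξ))) := by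
        congr 1; rw [sub_smul]; abel
    _ = c.RM z (w • c.jm (c.RM w ξ) - c.Hbar (c.RM w ξ))
          - c.RM z (z • c.jm (c.RM w ξ) - c.Hbar (c.RM w ξ)) := map_sub _ _ _
    _ = c.RM z ξ - c.RM w ξ := by rw [c.RM_right hw ξ, c.RM_left hz (c.RM w ξ)]

lemma Gb_apply (c : Ctx F H1 Hm1) (z : ℂ) (x : F × Hm1) :
    c.Gb z x = c.G z x.1 + c.RM z x.2 := rfl

lemma Gbstar_apply (c : Ctx F H1 Hm1) (z : ℂ) (v : F) :
    c.Gbstar z v = (c.A (c.RF z v), c.RF z v) := rfl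

lemma Gb_sub (c : Ctx F H1 Hm1) {z w : ℂ} (hz : z ∈ c.res) (hw : w ∈ c.res) (x : F × Hm1) :
    c.Gb z x - c.Gb w x = (w - z) • c.j1 (c.RF z (c.Gb w x)) := by
  simp only [c.Gb_apply]
  have h1 := c.G_sub hz hw x.1
  have h2 := c.RM_sub hz hw x.2
  calc c.G z x.1 + c.RM z x.2 - (c.G w x.1 + c.RM w x.2)
      = (c.G z x.1 - c.G w x.1) + (c.RM z x.2 - c.RM w x.2) := by abel
    _ = (w - z) • c.j1 (c.RF z (c.G w x.1)) + (w - z) • c.j1 (c.RF z (c.RM w x.2)) := by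
        rw [h1, h2]
    _ = (w - z) • c.j1 (c.RF z (c.G w x.1 + c.RM w x.2)) := by
        rw [map_add, map_add, smul_add]

lemma Gbstar_sub (c : Ctx F H1 Hm1) {z w : ℂ} (hz : z ∈ c.res) (hw : w ∈ c.res) (v : F) :
    c.Gbstar z v - c.Gbstar w v = (w - z) • c.Gbstar z (c.j1 (c.RF w v)) := by
  have h := c.RF_sub hz hw v
  simp only [c.Gbstar_apply, Prod.mk_sub_mk, Prod.smul_mk, Prod.mk.injEq]
  refine ⟨?_, ?_⟩
  · rw [← map_sub, h, map_smul]
  · exact h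

lemma RF_G_comm (c : Ctx F H1 Hm1) {z w : ℂ} (hz : z ∈ c.res) (hw : w ∈ c.res) (ξ : F) :
    c.RF w (c.G z ξ) = c.RF z (c.G w ξ) := by
  have h1 : c.G z ξ = c.G w ξ + (w - z) • c.j1 (c.RF z (c.G w ξ)) := by
    rw [← c.G_sub hz hw ξ]; abel
  have h2 : c.RF z (c.G w ξ) = c.RF w (c.G w ξ) + (w - z) • c.RF w (c.j1 (c.RF z (c.G w ξ))) := by
    have := c.RF_sub' hz hw (c.G w ξ)
    rw [← this]; abel
  rw [h1, map_add, map_smul]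
  exact h2.symm

lemma Msub (c : Ctx F H1 Hm1) {lam : ℝ} {z w : ℂ} (hlr : (lam : ℂ) ∈ c.res)
    (hz : z ∈ c.res) (hw : w ∈ c.res) (x : F × Hm1) :
    c.M lam z x - c.M lam w x = (z - w) • c.Gbstar z (c.Gb w x) := by
  have hGb : c.Gb z x = c.Gb w x + (w - z) • c.j1 (c.RF z (c.Gb w x)) := by
    rw [← c.Gb_sub hz hw x]; abel
  have hGs : c.Gbstar z (c.Gb w x) = c.Gbstar lam (c.Gb w x)
      - (z - (lam : ℂ)) • c.Gbstar lam (c.j1 (c.RF z (c.Gb w x))) := by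
    have := c.Gbstar_sub hlr hz (c.Gb w x)
    -- Gbstar lam v - Gbstar z v = (z - lam) • Gbstar lam (j1 (RF z v))
    rw [← this]; abel
  rw [Ctx.M, Ctx.M, ContinuousLinearMap.smul_apply, ContinuousLinearMap.smul_apply,
    ContinuousLinearMap.comp_apply, ContinuousLinearMap.comp_apply, hGb, map_add, map_smul,
    hGs]
  module

end Ctx

namespace Ctx

lemma key (c : Ctx F H1 Hm1) {lam : ℝ} {z : ℂ} (hlr : (lam : ℂ) ∈ c.res) (hz : z ∈ c.res)
    (S : H1 →ₗ[ℂ] F) (Λ : (F × H1) →L[ℂ] (F × Hm1)) (hΛ : c.IsInvTheta lam S z Λ) (χ : F) :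
    ∃ ψ ψ0 φ, c.j1 ψ0 = ψ - c.G (lam : ℂ) ψ ∧ Λ (c.Gbstar z χ) = (ψ, c.jm φ) ∧
      c.ThetaMS lam S z ψ ψ0 φ = c.Gbstar z χ ∧
      ψ = c.G z ψ + c.j1 (c.RF z φ) + c.j1 (c.RF z χ) ∧
      c.Rhat z Λ χ = ψ := by
  obtain ⟨ψ, ψ0, φ, hlift, hΛy, hθ⟩ := hΛ.2 (c.Gbstar z χ)
  have h2 : ψ0 - c.RF (lam : ℂ) φ
      + (z - (lam : ℂ)) • (c.RF (lam : ℂ) (c.G z ψ) + c.RF (lam : ℂ) (c.j1 (c.RF z φ)))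
      = c.RF z χ := by
    have := congrArg Prod.snd hθ
    simp only [Ctx.ThetaMS, Ctx.ThetaS, Ctx.M, Ctx.Gb_apply, Ctx.Gbstar_apply,
      ContinuousLinearMap.smul_apply, ContinuousLinearMap.comp_apply, Prod.snd_add,
      Prod.smul_snd, c.RMjm hz, map_add] at this
    simpa using this
  have e1 : (z - (lam : ℂ)) • c.j1 (c.RF (lam : ℂ) (c.G z ψ))
      = c.G (lam : ℂ) ψ - c.G z ψ := (c.G_sub hlr hz ψ).symm
  have e2 : (z - (lam : ℂ)) • c.j1 (c.RF (lam : ℂ) (c.j1 (c.RF z φ)))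
      = c.j1 (c.RF (lam : ℂ) φ) - c.j1 (c.RF z φ) := by
    have h := c.RF_sub hlr hz φ
    rw [← map_sub, h, map_smul]
  have h4 := congrArg c.j1 h2
  simp only [map_add, map_sub, map_smul] at h4
  rw [smul_add, e1, e2, hlift] at h4
  have h5 : ψ - c.G z ψ - c.j1 (c.RF z φ) = c.j1 (c.RF z χ) := by rw [← h4]; abel
  have hstar : ψ = c.G z ψ + c.j1 (c.RF z φ) + c.j1 (c.RF z χ) := by rw [← h5]; abel
  have hR : c.Rhat z Λ χ = ψ := by
    rw [Ctx.Rhat]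
    simp only [ContinuousLinearMap.add_apply, ContinuousLinearMap.comp_apply]
    rw [hΛy, c.Gb_apply]
    simp only [c.RMjm hz]
    conv_rhs => rw [hstar]
    abel
  exact ⟨ψ, ψ0, φ, hlift, hΛy, hθ, hstar, hR⟩

lemma Rhat_fst (c : Ctx F H1 Hm1) {lam : ℝ} {z : ℂ} (hlr : (lam : ℂ) ∈ c.res)
    (hz : z ∈ c.res) (S : H1 →ₗ[ℂ] F) (Λ : (F × H1) →L[ℂ] (F × Hm1))
    (hΛ : c.IsInvTheta lam S z Λ) (χ : F) :
    c.Rhat z Λ χ = (Λ (c.Gbstar z χ)).1 := by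
  obtain ⟨ψ, ψ0, φ, _, hΛy, _, _, hR⟩ := c.key hlr hz S Λ hΛ χ
  rw [hR, hΛy]

lemma Rhat_def (c : Ctx F H1 Hm1) (z : ℂ) (Λ : (F × H1) →L[ℂ] (F × Hm1)) (χ : F) :
    c.Rhat z Λ χ = c.j1 (c.RF z χ) + c.Gb z (Λ (c.Gbstar z χ)) := by
  rw [Ctx.Rhat]
  simp only [ContinuousLinearMap.add_apply, ContinuousLinearMap.comp_apply]

lemma Lam_sub (c : Ctx F H1 Hm1) {lam : ℝ} {z w : ℂ} (hlr : (lam : ℂ) ∈ c.res)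
    (hz : z ∈ c.res) (hw : w ∈ c.res) (S : H1 →ₗ[ℂ] F)
    (Λz Λw : (F × H1) →L[ℂ] (F × Hm1))
    (hΛz : c.IsInvTheta lam S z Λz) (hΛw : c.IsInvTheta lam S w Λw) (y : F × H1) :
    Λz y = Λw y - (z - w) • Λz (c.Gbstar z (c.Gb w (Λw y))) := by
  obtain ⟨ψ, ψ0, φ, hlift, hΛy, hθ⟩ := hΛw.2 y
  have hθz : c.ThetaMS lam S z ψ ψ0 φ
      = y + (z - w) • c.Gbstar z (c.Gb w (ψ, c.jm φ)) := by
    have hM := c.Msub hlr hz hw (ψ, c.jm φ)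
    rw [Ctx.ThetaMS] at hθ ⊢
    rw [← hθ, ← hM]
    abel
  have h1 := hΛz.1 ψ ψ0 φ hlift
  rw [hθz, map_add, map_smul, ← hΛy] at h1
  exact (eq_sub_of_add_eq h1)

lemma main1 (c : Ctx F H1 Hm1) {lam : ℝ} {z w : ℂ} (hlr : (lam : ℂ) ∈ c.res)
    (hz : z ∈ c.res) (hw : w ∈ c.res) (S : H1 →ₗ[ℂ] F)
    (Λz Λw : (F × H1) →L[ℂ] (F × Hm1))
    (hΛz : c.IsInvTheta lam S z Λz) (hΛw : c.IsInvTheta lam S w Λw) (χ : F) :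
    c.Rhat z Λz χ - c.Rhat w Λw χ = (w - z) • c.Rhat z Λz (c.Rhat w Λw χ) := by
  have hgs : c.Gbstar z χ = c.Gbstar w χ + (w - z) • c.Gbstar z (c.j1 (c.RF w χ)) := by
    rw [← c.Gbstar_sub hz hw χ]; abel
  have hΛdiff : Λz (c.Gbstar z χ) - Λw (c.Gbstar w χ)
      = (w - z) • Λz (c.Gbstar z (c.Rhat w Λw χ)) := by
    calc Λz (c.Gbstar z χ) - Λw (c.Gbstar w χ)
        = Λz (c.Gbstar w χ) + (w - z) • Λz (c.Gbstar z (c.j1 (c.RF w χ)))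
            - Λw (c.Gbstar w χ) := by rw [hgs, map_add, map_smul]
      _ = (w - z) • Λz (c.Gbstar z (c.j1 (c.RF w χ)))
            - (z - w) • Λz (c.Gbstar z (c.Gb w (Λw (c.Gbstar w χ)))) := by
          rw [c.Lam_sub hlr hz hw S Λz Λw hΛz hΛw (c.Gbstar w χ)]; abel
      _ = (w - z) • (Λz (c.Gbstar z (c.j1 (c.RF w χ)))
            + Λz (c.Gbstar z (c.Gb w (Λw (c.Gbstar w χ))))) := by module
      _ = (w - z) • Λz (c.Gbstar z (c.j1 (c.RF w χ) + c.Gb w (Λw (c.Gbstar w χ)))) := by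
          rw [map_add, map_add]
      _ = (w - z) • Λz (c.Gbstar z (c.Rhat w Λw χ)) := by rw [← c.Rhat_def]
  calc c.Rhat z Λz χ - c.Rhat w Λw χ
      = (Λz (c.Gbstar z χ)).1 - (Λw (c.Gbstar w χ)).1 := by
        rw [c.Rhat_fst hlr hz S Λz hΛz χ, c.Rhat_fst hlr hw S Λw hΛw χ]
    _ = (Λz (c.Gbstar z χ) - Λw (c.Gbstar w χ)).1 := by rw [Prod.fst_sub]
    _ = ((w - z) • Λz (c.Gbstar z (c.Rhat w Λw χ))).1 := by rw [hΛdiff]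
    _ = (w - z) • (Λz (c.Gbstar z (c.Rhat w Λw χ))).1 := by rw [Prod.smul_fst]
    _ = (w - z) • c.Rhat z Λz (c.Rhat w Λw χ) := by
        rw [← c.Rhat_fst hlr hz S Λz hΛz (c.Rhat w Λw χ)]

end Ctx

namespace Ctx

lemma innGst_r (c : Ctx F H1 Hm1) (lam : ℝ) (ψ x : F) :
    ⟪ψ, c.Gst lam x⟫ = ⟪c.G (lam : ℂ) ψ, x⟫ := by
  rw [Ctx.Gst, ContinuousLinearMap.adjoint_inner_right]

lemma innGst_l (c : Ctx F H1 Hm1) (lam : ℝ) (x ψ' : F) :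
    ⟪c.Gst lam x, ψ'⟫ = ⟪x, c.G (lam : ℂ) ψ'⟫ := by
  rw [Ctx.Gst, ContinuousLinearMap.adjoint_inner_left]

lemma innAl_r (c : Ctx F H1 Hm1) (lam : ℝ) (ψ u : F) :
    ⟪ψ, c.A (c.RF (lam : ℂ) u)⟫ = ⟪c.G (lam : ℂ) ψ, u⟫ := by
  rw [c.inner_G_left, Complex.conj_ofReal]

lemma innAl_l (c : Ctx F H1 Hm1) (lam : ℝ) (u ψ' : F) :
    ⟪c.A (c.RF (lam : ℂ) u), ψ'⟫ = ⟪u, c.G (lam : ℂ) ψ'⟫ := by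
  rw [c.inner_G_right, Complex.conj_ofReal]

lemma jRF_real (c : Ctx F H1 Hm1) {lam : ℝ} (hlr : (lam : ℂ) ∈ c.res) (x y : F) :
    ⟪c.j1 (c.RF (lam : ℂ) x), y⟫ = ⟪x, c.j1 (c.RF (lam : ℂ) y)⟫ := by
  have := c.inner_jRF hlr x y
  rwa [Complex.conj_ofReal] at this

lemma innGz_left' (c : Ctx F H1 Hm1) (z : ℂ) (ψ χ : F) :
    ⟪c.G ((starRingEnd ℂ) z) ψ, χ⟫ = ⟪ψ, c.A (c.RF z χ)⟫ := by
  rw [c.inner_G_left, Complex.conj_conj]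

lemma ThetaMS_fst (c : Ctx F H1 Hm1) {z : ℂ} (hz : z ∈ c.res) (lam : ℝ)
    (S : H1 →ₗ[ℂ] F) (ψ : F) (ψ0 : H1) (φ : F) :
    (c.ThetaMS lam S z ψ ψ0 φ).1
      = S ψ0 - c.Gst lam (S ψ0) + φ - c.Gst lam φ
        + (z - (lam : ℂ)) • c.A (c.RF (lam : ℂ) (c.G z ψ + c.j1 (c.RF z φ))) := by
  simp only [Ctx.ThetaMS, Ctx.ThetaS, Ctx.M, Ctx.Gb_apply, Ctx.Gbstar_apply,
    ContinuousLinearMap.smul_apply, ContinuousLinearMap.comp_apply, Prod.fst_add,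
    Prod.smul_fst, c.RMjm hz]

lemma ThetaMS_snd (c : Ctx F H1 Hm1) {z : ℂ} (hz : z ∈ c.res) (lam : ℝ)
    (S : H1 →ₗ[ℂ] F) (ψ : F) (ψ0 : H1) (φ : F) :
    (c.ThetaMS lam S z ψ ψ0 φ).2
      = ψ0 - c.RF (lam : ℂ) φ
        + (z - (lam : ℂ)) • c.RF (lam : ℂ) (c.G z ψ + c.j1 (c.RF z φ)) := by
  simp only [Ctx.ThetaMS, Ctx.ThetaS, Ctx.M, Ctx.Gb_apply, Ctx.Gbstar_apply,
    ContinuousLinearMap.smul_apply, ContinuousLinearMap.comp_apply, Prod.snd_add,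
    Prod.smul_snd, c.RMjm hz]

lemma sympair (c : Ctx F H1 Hm1) {lam : ℝ} {z : ℂ} (hlr : (lam : ℂ) ∈ c.res)
    (hz : z ∈ c.res) (S : H1 →ₗ[ℂ] F) (hS : c.IsSymmOp S)
    (ψ ψ' : F) (ψ0 ψ0' : H1) (φ φ' : F)
    (h : c.j1 ψ0 = ψ - c.G (lam : ℂ) ψ) (h' : c.j1 ψ0' = ψ' - c.G (lam : ℂ) ψ') :
    ⟪ψ, (c.ThetaMS lam S z ψ' ψ0' φ').1⟫ + ⟪φ, c.j1 (c.ThetaMS lam S z ψ' ψ0' φ').2⟫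
      = ⟪(c.ThetaMS lam S ((starRingEnd ℂ) z) ψ ψ0 φ).1, ψ'⟫
        + ⟪c.j1 (c.ThetaMS lam S ((starRingEnd ℂ) z) ψ ψ0 φ).2, φ'⟫ := by
  have hzc : (starRingEnd ℂ) z ∈ c.res := c.res_conj hz
  have ha : ⟪ψ, (S ψ0' : F)⟫ - ⟪ψ, c.Gst lam (S ψ0')⟫
      = ⟪(S ψ0 : F), ψ'⟫ - ⟪c.Gst lam (S ψ0), ψ'⟫ := by
    rw [c.innGst_r, ← inner_sub_left, ← h, c.innGst_l, ← inner_sub_right, ← h']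
    exact (hS ψ0 ψ0').symm
  have hb : ⟪ψ, φ'⟫ - ⟪ψ, c.Gst lam φ'⟫ = ⟪c.j1 ψ0, φ'⟫ := by
    rw [c.innGst_r, ← inner_sub_left, ← h]
  have hc : ⟪φ, ψ'⟫ - ⟪c.Gst lam φ, ψ'⟫ = ⟪φ, c.j1 ψ0'⟫ := by
    rw [c.innGst_l, ← inner_sub_right, ← h']
  have hd : ⟪φ, c.j1 (c.RF (lam : ℂ) φ')⟫ = ⟪c.j1 (c.RF (lam : ℂ) φ), φ'⟫ :=
    (c.jRF_real hlr φ φ').symm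
  have t1 : ⟪ψ, c.A (c.RF (lam : ℂ) (c.G z ψ'))⟫
      = ⟪c.A (c.RF (lam : ℂ) (c.G ((starRingEnd ℂ) z) ψ)), ψ'⟫ := by
    rw [c.RF_G_comm hz hlr ψ', ← c.innGz_left', c.innAl_l]
  have t2 : ⟪ψ, c.A (c.RF (lam : ℂ) (c.j1 (c.RF z φ')))⟫
      = ⟪c.j1 (c.RF (lam : ℂ) (c.G ((starRingEnd ℂ) z) ψ)), φ'⟫ := by
    rw [c.RF_comm hlr hz φ', ← c.innGz_left', c.jRF_real hlr]
  have t3 : ⟪φ, c.j1 (c.RF (lam : ℂ) (c.G z ψ'))⟫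
      = ⟪c.A (c.RF (lam : ℂ) (c.j1 (c.RF ((starRingEnd ℂ) z) φ))), ψ'⟫ := by
    rw [c.RF_G_comm hz hlr ψ', ← c.inner_jRF hz φ, c.innAl_l]
  have t4 : ⟪φ, c.j1 (c.RF (lam : ℂ) (c.j1 (c.RF z φ')))⟫
      = ⟪c.j1 (c.RF (lam : ℂ) (c.j1 (c.RF ((starRingEnd ℂ) z) φ))), φ'⟫ := by
    rw [c.RF_comm hlr hz φ', ← c.inner_jRF hz φ, c.jRF_real hlr]
  rw [c.ThetaMS_fst hz, c.ThetaMS_snd hz, c.ThetaMS_fst hzc, c.ThetaMS_snd hzc]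
  simp only [map_add, map_sub, map_smul, inner_add_right, inner_sub_right,
    inner_smul_right, inner_add_left, inner_sub_left, inner_smul_left, map_ofNat,
    Complex.conj_conj, Complex.conj_ofReal]
  linear_combination ha + hb - hc - hd + (z - (lam : ℂ)) * (t1 + t2 + t3 + t4)

end Ctx

namespace Ctx

lemma main2 (c : Ctx F H1 Hm1) {lam : ℝ} {z : ℂ} (hlr : (lam : ℂ) ∈ c.res)
    (hz : z ∈ c.res) (S : H1 →ₗ[ℂ] F) (hS : c.IsSymmOp S)
    (Λz Λzc : (F × H1) →L[ℂ] (F × Hm1))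
    (hΛz : c.IsInvTheta lam S z Λz)
    (hΛzc : c.IsInvTheta lam S ((starRingEnd ℂ) z) Λzc) (χ χ' : F) :
    ⟪c.Rhat ((starRingEnd ℂ) z) Λzc χ, χ'⟫ = ⟪χ, c.Rhat z Λz χ'⟫ := by
  have hzc : (starRingEnd ℂ) z ∈ c.res := c.res_conj hz
  obtain ⟨ψ, ψ0, φ, hlift, -, hθ, hstar, hR⟩ := c.key hlr hzc S Λzc hΛzc χ
  obtain ⟨ψ', ψ0', φ', hlift', -, hθ', hstar', hR'⟩ := c.key hlr hz S Λz hΛz χ'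
  rw [hR, hR']
  have hl : ⟪ψ, χ'⟫ = ⟪ψ, c.A (c.RF z χ')⟫ + ⟪φ, c.j1 (c.RF z χ')⟫
      + ⟪χ, c.j1 (c.RF z χ')⟫ := by
    conv_lhs => rw [hstar]
    rw [inner_add_left, inner_add_left, c.innGz_left', c.inner_jRF hz φ χ',
      c.inner_jRF hz χ χ']
  have hr : ⟪χ, ψ'⟫ = ⟪c.A (c.RF ((starRingEnd ℂ) z) χ), ψ'⟫
      + ⟪c.j1 (c.RF ((starRingEnd ℂ) z) χ), φ'⟫ + ⟪χ, c.j1 (c.RF z χ')⟫ := by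
    conv_lhs => rw [hstar']
    rw [inner_add_right, inner_add_right, c.inner_G_right,
      ← c.inner_jRF hz χ φ']
  have hc1 : (c.ThetaMS lam S z ψ' ψ0' φ').1 = c.A (c.RF z χ') := by rw [hθ']; rfl
  have hc2 : (c.ThetaMS lam S z ψ' ψ0' φ').2 = c.RF z χ' := by rw [hθ']; rfl
  have hd1 : (c.ThetaMS lam S ((starRingEnd ℂ) z) ψ ψ0 φ).1
      = c.A (c.RF ((starRingEnd ℂ) z) χ) := by rw [hθ]; rfl
  have hd2 : (c.ThetaMS lam S ((starRingEnd ℂ) z) ψ ψ0 φ).2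
      = c.RF ((starRingEnd ℂ) z) χ := by rw [hθ]; rfl
  rw [hl, hr, ← hc1, ← hc2, ← hd1, ← hd2]
  have := c.sympair hlr hz S hS ψ ψ' ψ0 ψ0' φ φ' hlift hlift'
  linear_combination this

lemma RF_inj (c : Ctx F H1 Hm1) {z : ℂ} (hz : z ∈ c.res) {x : F}
    (hx : c.RF z x = 0) : x = 0 := by
  have := c.RF_right hz x
  rw [hx] at this
  simpa using this.symm

lemma main3 (c : Ctx F H1 Hm1) {lam : ℝ} (hlr : (lam : ℂ) ∈ c.res)
    (S : H1 →ₗ[ℂ] F) (Λlam : (F × H1) →L[ℂ] (F × Hm1))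
    (hΛlam : c.IsInvTheta lam S (lam : ℂ) Λlam) (χ : F)
    (hχ : c.Rhat (lam : ℂ) Λlam χ = 0) : χ = 0 := by
  obtain ⟨ψ, ψ0, φ, hlift, -, hθ, -, hR⟩ := c.key hlr hlr S Λlam hΛlam χ
  have hψ : ψ = 0 := by rw [← hR, hχ]
  subst hψ
  have hψ0 : ψ0 = 0 := by
    apply c.j1_inj
    rw [hlift]; simp
  subst hψ0
  have h2 : (c.ThetaMS lam S (lam : ℂ) 0 0 φ).2 = c.RF (lam : ℂ) χ := by rw [hθ]; rfl
  rw [c.ThetaMS_snd hlr] at h2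
  simp only [sub_self, zero_smul, add_zero, zero_sub] at h2
  have hφ : φ = -χ := by
    have h0 : c.RF (lam : ℂ) (φ + χ) = 0 := by
      rw [map_add, ← h2]; abel
    exact eq_neg_of_add_eq_zero_left (c.RF_inj hlr h0)
  have h1 : (c.ThetaMS lam S (lam : ℂ) 0 0 φ).1 = c.A (c.RF (lam : ℂ) χ) := by
    rw [hθ]; rfl
  rw [c.ThetaMS_fst hlr] at h1
  simp only [map_zero, sub_self, zero_smul, add_zero, zero_sub, zero_add, sub_zero] at h1
  have hGst : ∀ x : F, c.Gst lam x = c.A (c.RF (lam : ℂ) x) := by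
    intro x
    rw [Ctx.Gst, Ctx.G, Complex.conj_ofReal, ContinuousLinearMap.adjoint_adjoint]
    rfl
  rw [hφ, hGst, map_neg, map_neg, sub_neg_eq_add] at h1
  have hfin : -χ = 0 := add_eq_right.mp h1
  simpa using neg_eq_zero.mp hfin

end Ctx



/-- Assume (H3) and `λ∘ ∈ Z_S`; for `z ∈ Z_S` set
`R̂_z := R_z + 𝔾_z(Θ_S+M_z)⁻¹𝔾_{z̄}*`.  Then `R̂` is a pseudo-resolvent:
`R̂_z - R̂_w = (w-z)R̂_zR̂_w`; moreover `R̂_z* = R̂_{z̄}` and `ker(R̂_{λ∘}) = {0}`. -/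
theorem statement8 (c : Ctx F H1 Hm1) (lam : ℝ) (hlam : lam < c.lamInf)
    (hH3 : c.H3) (S : H1 →ₗ[ℂ] F) (hS : c.IsSymmOp S)
    (Λlam : (F × H1) →L[ℂ] (F × Hm1)) (hΛlam : c.IsInvTheta lam S (lam : ℂ) Λlam)
    (z : ℂ) (hz : z ∈ c.ZS lam S) (Λz : (F × H1) →L[ℂ] (F × Hm1))
    (hΛz : c.IsInvTheta lam S z Λz)
    (w : ℂ) (hw : w ∈ c.ZS lam S) (Λw : (F × H1) →L[ℂ] (F × Hm1))
    (hΛw : c.IsInvTheta lam S w Λw)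
    (Λzc : (F × H1) →L[ℂ] (F × Hm1)) (hΛzc : c.IsInvTheta lam S (starRingEnd ℂ z) Λzc) :
    c.Rhat z Λz - c.Rhat w Λw = (w - z) • ((c.Rhat z Λz).comp (c.Rhat w Λw)) ∧
    ContinuousLinearMap.adjoint (c.Rhat z Λz) = c.Rhat (starRingEnd ℂ z) Λzc ∧
    (∀ ψ : F, c.Rhat (lam : ℂ) Λlam ψ = 0 → ψ = 0) := by
  have hlr : (lam : ℂ) ∈ c.res := c.res_below lam hlam
  have hzres : z ∈ c.res := hz.1
  have hwres : w ∈ c.res := hw.1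
  refine ⟨?_, ?_, ?_⟩
  · ext χ
    simp only [ContinuousLinearMap.sub_apply, ContinuousLinearMap.smul_apply,
      ContinuousLinearMap.comp_apply]
    exact c.main1 hlr hzres hwres S Λz Λw hΛz hΛw χ
  · symm
    rw [ContinuousLinearMap.eq_adjoint_iff]
    intro x y
    exact c.main2 hlr hzres S hS Λz Λzc hΛz hΛzc x y
  · intro ψ hψ
    exact c.main3 hlr S Λlam hΛlam ψ hψ
end
end
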